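/- For every player i and every vector v ∈ ℝ^S, the linear system T_i ξ = v has a solution if and only if the rank of the augmented matrix [T_i, v] equals k_{N_i} + k_{-i} - k_{U(i)}, where k_{N_i} = ∏_{j∈N_i} |S_j|, k_{-i} = ∏_{j≠i} |S_j|, and k_{U(i)} = ∏_{j∈U(i)} |S_j|. -/

import Mathlib

open Matrix

/-- The `W`-drawing matrix. -/
def drawing {n : ℕ} (S : Fin n → Type*) [∀ i, Fintype (S i)] [∀ i, DecidableEq (S i)]
    (W : Finset (Fin n)) :
    Matrix ((j : {j : Fin n // j ∈ W}) → S j.1) ((j : Fin n) → S j) ℝ :=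
  fun u x => if (fun j : {j : Fin n // j ∈ W} => x j.1) = u then 1 else 0

/-- The utility design matrix `T_i = [Γ_{N_i}ᵀ, Γ_{N\{i}}ᵀ]`. -/
def Tmat {n : ℕ} (S : Fin n → Type*) [∀ i, Fintype (S i)] [∀ i, DecidableEq (S i)]
    (U : Fin n → Finset (Fin n)) (i : Fin n) :
    Matrix ((j : Fin n) → S j)
      (((j : {j : Fin n // j ∈ insert i (U i)}) → S j.1) ⊕
        ((j : {j : Fin n // j ∈ Finset.univ.erase i}) → S j.1)) ℝ :=
  Matrix.fromCols (drawing S (insert i (U i)))ᵀ (drawing S (Finset.univ.erase i))ᵀ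

/-- `Λ_i`. -/
def Lmat {n : ℕ} (S : Fin n → Type*) [∀ i, Fintype (S i)] [∀ i, DecidableEq (S i)]
    (U : Fin n → Finset (Fin n)) (i : Fin n) :
    Matrix ((j : {j : Fin n // j ∈ insert i (U i)}) → S j.1)
      ((j : {j : Fin n // j ∈ U i}) → S j.1) ℝ :=
  fun x y =>
    if (fun j : {j : Fin n // j ∈ U i} => x ⟨j.1, Finset.mem_insert_of_mem j.2⟩) = y then 1 else 0

/-- `Υ_i`. -/
def Umat {n : ℕ} (S : Fin n → Type*) [∀ i, Fintype (S i)] [∀ i, DecidableEq (S i)]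
    (U : Fin n → Finset (Fin n)) (hU : ∀ i, i ∉ U i) (i : Fin n) :
    Matrix ((j : {j : Fin n // j ∈ Finset.univ.erase i}) → S j.1)
      ((j : {j : Fin n // j ∈ U i}) → S j.1) ℝ :=
  fun x y =>
    if (fun j : {j : Fin n // j ∈ U i} =>
        x ⟨j.1, Finset.mem_erase.mpr ⟨fun h => hU i (by simpa [h] using j.2), Finset.mem_univ _⟩⟩) = y
    then 1 else 0

/-- `H_i = [Λ_i; -Υ_i]`. -/
def Hmat {n : ℕ} (S : Fin n → Type*) [∀ i, Fintype (S i)] [∀ i, DecidableEq (S i)]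
    (U : Fin n → Finset (Fin n)) (hU : ∀ i, i ∉ U i) (i : Fin n) :
    Matrix (((j : {j : Fin n // j ∈ insert i (U i)}) → S j.1) ⊕
        ((j : {j : Fin n // j ∈ Finset.univ.erase i}) → S j.1))
      ((j : {j : Fin n // j ∈ U i}) → S j.1) ℝ :=
  Matrix.fromRows (Lmat S U i) (-(Umat S U hU i))

set_option linter.unusedSectionVars false
open Matrix

section Aux
variable {n : ℕ} (S : Fin n → Type*) [∀ i, Fintype (S i)] [∀ i, DecidableEq (S i)]
  [∀ i, Nonempty (S i)]

/-- extend a `W`-profile to a full profile -/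
noncomputable def extFun (W : Finset (Fin n)) (u : (j : {j : Fin n // j ∈ W}) → S j.1) :
    (j : Fin n) → S j :=
  fun j => if h : j ∈ W then u ⟨j, h⟩ else Classical.arbitrary _

lemma restrict_extFun (W : Finset (Fin n)) (u : (j : {j : Fin n // j ∈ W}) → S j.1) :
    (fun j : {j : Fin n // j ∈ W} => extFun S W u j.1) = u := by
  funext j; simp [extFun, j.2]

/-- the linear map `c ↦ c ∘ restrict_W` -/
def Lmap (W : Finset (Fin n)) :
    (((j : {j : Fin n // j ∈ W}) → S j.1) → ℝ) →ₗ[ℝ] (((j : Fin n) → S j) → ℝ) where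
  toFun c := fun x => c (fun j => x j.1)
  map_add' _ _ := rfl
  map_smul' _ _ := rfl

lemma mulVecLin_drawing (W : Finset (Fin n)) :
    (drawing S W)ᵀ.mulVecLin = Lmap S W := by
  ext c x
  simp [Matrix.mulVecLin, Matrix.mulVec, drawing, dotProduct, Lmap, ite_mul, Pi.single_apply]

lemma Lmap_injective (W : Finset (Fin n)) : Function.Injective (Lmap S W) := by
  intro c c' h
  funext u
  have := congrFun h (extFun S W u)
  simpa [Lmap, restrict_extFun] using this

lemma finrank_range_Lmap (W : Finset (Fin n)) :
    Module.finrank ℝ (LinearMap.range (Lmap S W)) = ∏ j ∈ W, Fintype.card (S j) := by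
  rw [LinearMap.finrank_range_of_inj (Lmap_injective S W),
    Module.finrank_fintype_fun_eq_card, Fintype.card_pi, ← Finset.prod_coe_sort W]

lemma mem_range_Lmap {W : Finset (Fin n)} {f : ((j : Fin n) → S j) → ℝ} :
    f ∈ LinearMap.range (Lmap S W) ↔
      ∀ x y : (j : Fin n) → S j, (∀ j ∈ W, x j = y j) → f x = f y := by
  constructor
  · rintro ⟨c, rfl⟩ x y h
    show c _ = c _
    congr 1; funext j; exact h j.1 j.2
  · intro h
    refine ⟨fun u => f (extFun S W u), ?_⟩
    funext x
    show f (extFun S W fun j => x j.1) = f x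
    apply h
    intro j hj
    simp [extFun, hj]

lemma inf_range_Lmap (W1 W2 : Finset (Fin n)) :
    LinearMap.range (Lmap S W1) ⊓ LinearMap.range (Lmap S W2)
      = LinearMap.range (Lmap S (W1 ∩ W2)) := by
  apply le_antisymm
  · intro f hf
    obtain ⟨h1, h2⟩ := Submodule.mem_inf.mp hf
    rw [mem_range_Lmap] at h1 h2 ⊢
    intro x y h
    set z : (j : Fin n) → S j := fun j => if j ∈ W1 then x j else y j with hz
    have hx : f x = f z := by
      apply h1; intro j hj; simp [hz, hj]
    have hy : f z = f y := by
      apply h2; intro j hj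
      by_cases hj1 : j ∈ W1
      · simp only [hz, if_pos hj1]
        exact h j (Finset.mem_inter.mpr ⟨hj1, hj⟩)
      · simp [hz, hj1]
    exact hx.trans hy
  · intro f hf
    rw [mem_range_Lmap] at hf
    have h1 : f ∈ LinearMap.range (Lmap S W1) := by
      rw [mem_range_Lmap]; intro x y h
      exact hf x y fun j hj => h j (Finset.mem_of_mem_inter_left hj)
    have h2 : f ∈ LinearMap.range (Lmap S W2) := by
      rw [mem_range_Lmap]; intro x y h
      exact hf x y fun j hj => h j (Finset.mem_of_mem_inter_right hj)
    exact Submodule.mem_inf.mpr ⟨h1, h2⟩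

lemma range_fromColumns {m p q : Type*} [Fintype p] [Fintype q]
    (A : Matrix m p ℝ) (B : Matrix m q ℝ) :
    LinearMap.range (fromCols A B).mulVecLin
      = LinearMap.range A.mulVecLin ⊔ LinearMap.range B.mulVecLin := by
  apply le_antisymm
  · rintro _ ⟨ξ, rfl⟩
    rw [mulVecLin_apply, ← Sum.elim_comp_inl_inr ξ, fromCols_mulVec_sumElim]
    exact Submodule.add_mem_sup ⟨_, rfl⟩ ⟨_, rfl⟩
  · rw [sup_le_iff]
    constructor <;> rintro _ ⟨ξ, rfl⟩
    · exact ⟨Sum.elim ξ 0, by simp [fromCols_mulVec_sumElim]⟩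
    · exact ⟨Sum.elim 0 ξ, by simp [fromCols_mulVec_sumElim]⟩

lemma range_colMat {m : Type*} (v : m → ℝ) :
    LinearMap.range (Matrix.mulVecLin (fun r (_ : Unit) => v r)) = Submodule.span ℝ {v} := by
  apply le_antisymm
  · rintro _ ⟨c, rfl⟩
    have : (fun r (_ : Unit) => v r) *ᵥ c = c () • v := by
      ext r; simp [Matrix.mulVec, dotProduct, mul_comm]
    change (fun r (_ : Unit) => v r) *ᵥ c ∈ _
    rw [this]
    exact Submodule.smul_mem _ _ (Submodule.mem_span_singleton_self v)
  · rw [Submodule.span_le, Set.singleton_subset_iff]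
    exact ⟨fun _ => 1, by ext r; change ((fun r (_ : Unit) => v r) *ᵥ fun _ => 1) r = v r; simp [Matrix.mulVec, dotProduct]⟩

end Aux

/-- For every player `i` and every vector `v ∈ ℝ^S`, the linear system
`T_i ξ = v` has a solution iff the rank of the augmented matrix `[T_i, v]` equals
`k_{N_i} + k_{-i} - k_{U(i)}`, where `k_W = ∏_{j ∈ W} |S_j|`. -/
theorem solvable_iff_rank_augmented
    {n : ℕ} (S : Fin n → Type*) [∀ i, Fintype (S i)] [∀ i, DecidableEq (S i)]
    [∀ i, Nonempty (S i)]
    (U : Fin n → Finset (Fin n)) (hU : ∀ i, i ∉ U i) (i : Fin n)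
    (v : ((j : Fin n) → S j) → ℝ) :
    (∃ ξ, Tmat S U i *ᵥ ξ = v) ↔
      (Matrix.fromCols (Tmat S U i) (fun r (_ : Unit) => v r)).rank =
        (∏ j ∈ insert i (U i), Fintype.card (S j)) +
          (∏ j ∈ Finset.univ.erase i, Fintype.card (S j)) -
          ∏ j ∈ U i, Fintype.card (S j) := by
  classical
  have hW : (insert i (U i)) ∩ (Finset.univ : Finset (Fin n)).erase i = U i := by
    ext j
    simp only [Finset.mem_inter, Finset.mem_insert, Finset.mem_erase,
      Finset.mem_univ, and_true]
    constructor
    · rintro ⟨h1 | h1, h2⟩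
      · exact absurd h1 h2
      · exact h1
    · intro h
      exact ⟨Or.inr h, fun hji => hU i (hji ▸ h)⟩
  set V := LinearMap.range (Tmat S U i).mulVecLin with hV
  have hT : V = LinearMap.range (Lmap S (insert i (U i))) ⊔
      LinearMap.range (Lmap S ((Finset.univ : Finset (Fin n)).erase i)) := by
    rw [hV, Tmat, range_fromColumns, mulVecLin_drawing, mulVecLin_drawing]
  have hrank : Module.finrank ℝ V + ∏ j ∈ U i, Fintype.card (S j)
      = (∏ j ∈ insert i (U i), Fintype.card (S j)) +
        ∏ j ∈ (Finset.univ : Finset (Fin n)).erase i, Fintype.card (S j) := by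
    rw [hT, ← finrank_range_Lmap S (insert i (U i)),
      ← finrank_range_Lmap S ((Finset.univ : Finset (Fin n)).erase i),
      ← Submodule.finrank_sup_add_finrank_inf_eq, inf_range_Lmap, hW, finrank_range_Lmap]
  have haug : (Matrix.fromCols (Tmat S U i) (fun r (_ : Unit) => v r)).rank
      = Module.finrank ℝ (V ⊔ Submodule.span ℝ {v} : Submodule ℝ _) := by
    show Module.finrank ℝ
      (LinearMap.range (Matrix.fromCols (Tmat S U i) fun r (_ : Unit) => v r).mulVecLin) = _
    rw [range_fromColumns (Tmat S U i) (fun r (_ : Unit) => v r), range_colMat, hV]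
  have hmem : (∃ ξ, Tmat S U i *ᵥ ξ = v) ↔ v ∈ V := by
    simp [hV, LinearMap.mem_range, Matrix.mulVecLin_apply]
  rw [hmem, haug]
  constructor
  · intro hv
    have hsup : V ⊔ Submodule.span ℝ {v} = V := by
      rw [sup_eq_left, Submodule.span_le, Set.singleton_subset_iff]
      exact hv
    rw [hsup]
    omega
  · intro h
    by_contra hv
    have hvne : v ≠ 0 := fun h0 => hv (h0 ▸ V.zero_mem)
    have hinf : V ⊓ Submodule.span ℝ {v} = ⊥ := by
      rw [eq_bot_iff]
      intro x hx
      obtain ⟨hx1, hx2⟩ := Submodule.mem_inf.mp hx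
      obtain ⟨a, rfl⟩ := Submodule.mem_span_singleton.mp hx2
      rcases eq_or_ne a 0 with rfl | ha
      · simp
      · exact absurd (by simpa [smul_smul, ha] using V.smul_mem a⁻¹ hx1) hv
    have hd := Submodule.finrank_sup_add_finrank_inf_eq V (Submodule.span ℝ {v})
    rw [hinf, finrank_bot, finrank_span_singleton hvne] at hd
    omega
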